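/- For natural numbers m ≤ j, the classical Stirling number of the second kind satisfies S(j,m) = C(j,m) · E[(β_1 + ... + β_m)^{j-m}], where β_1, ..., β_m are independent random variables each uniformly distributed on [0,1]. -/

import Mathlib

open MeasureTheory ProbabilityTheory

/-- Classical Stirling number of the second kind: the number of partitions of a
`j`-element set into `m` nonempty blocks. -/
def stirling (j m : ℕ) : ℕ :=
  Fintype.card {P : Finpartition (Finset.univ : Finset (Fin j)) // P.parts.card = m}

section aux
open Finset

set_option linter.unusedSectionVars false

variable {α γ : Type*} [Fintype α] [DecidableEq α] [Fintype γ] [DecidableEq γ]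


variable {α γ : Type*} [Fintype α] [DecidableEq α] [Fintype γ] [DecidableEq γ]

/-- fiber of `Sigma.fst` over `c` is `F c`. -/
def fiberFst (F : γ → Type*) (c : γ) : {x : Σ c', F c' // x.1 = c} ≃ F c where
  toFun x := x.2 ▸ x.1.2
  invFun y := ⟨⟨c, y⟩, rfl⟩
  left_inv := by rintro ⟨⟨c', y⟩, rfl⟩; rfl
  right_inv y := rfl

def masterEquiv (k : γ → ℕ) (f : α → γ) :
    {e : α ≃ (Σ c, Fin (k c)) // ∀ a, (e a).1 = f a} ≃ (∀ c, {a // f a = c} ≃ Fin (k c)) where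
  toFun e c := (e.1.subtypeEquiv (fun a => by rw [e.2 a])).trans (fiberFst _ c)
  invFun g := ⟨(Equiv.sigmaFiberEquiv f).symm.trans (Equiv.sigmaCongrRight g), fun a => rfl⟩
  left_inv := by
    rintro ⟨e, he⟩
    apply Subtype.ext
    apply Equiv.ext
    intro a
    show (⟨f a, fiberFst _ (f a) ⟨e a, he a⟩⟩ : Σ c, Fin (k c)) = e a
    have h : ∀ (x : Σ c, Fin (k c)) (hx : x.1 = f a),
        (⟨f a, fiberFst _ (f a) ⟨x, hx⟩⟩ : Σ c, Fin (k c)) = x := by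
      rintro ⟨c, y⟩ hx; cases hx; rfl
    exact h (e a) (he a)
  right_inv g := by
    funext c
    ext x
    obtain ⟨a, ha⟩ := x
    subst ha
    rfl

lemma card_fiber_eq_multinomial (k : γ → ℕ) (hk : ∑ c, k c = Fintype.card α) :
    Fintype.card {f : α → γ // ∀ c, #(univ.filter (fun a => f a = c)) = k c}
      = Nat.multinomial univ k := by
  classical
  set t : Finset (α → γ) :=
    univ.filter (fun f => ∀ c, #(univ.filter (fun a => f a = c)) = k c) with ht
  have hΦmem : ∀ e : α ≃ (Σ c, Fin (k c)), (fun a => (e a).1) ∈ t := by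
    intro e
    simp only [ht, mem_filter, mem_univ, true_and]
    intro c
    rw [← Fintype.card_subtype,
      Fintype.card_congr ((e.subtypeEquiv (fun a => Iff.rfl)).trans (fiberFst _ c))]
    simp
  have hsum : Fintype.card (α ≃ (Σ c, Fin (k c)))
      = ∑ f ∈ t, #(univ.filter (fun e : α ≃ (Σ c, Fin (k c)) => (fun a => (e a).1) = f)) := by
    rw [← Finset.card_univ]
    exact Finset.card_eq_sum_card_fiberwise (fun e _ => hΦmem e)
  have hfib : ∀ f ∈ t, #(univ.filter (fun e : α ≃ (Σ c, Fin (k c)) => (fun a => (e a).1) = f))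
      = ∏ c, Nat.factorial (k c) := by
    intro f hf
    simp only [ht, mem_filter, mem_univ, true_and] at hf
    rw [← Fintype.card_subtype]
    rw [Fintype.card_congr ((Equiv.subtypeEquivRight (fun e => funext_iff)).trans
      (masterEquiv k f))]
    rw [Fintype.card_pi]
    refine Finset.prod_congr rfl (fun c _ => ?_)
    have hfc : Fintype.card {a // f a = c} = k c := by
      rw [Fintype.card_subtype, hf c]
    rw [Fintype.card_equiv (Fintype.equivFinOfCardEq hfc), hfc]
  have hcard : Fintype.card (Σ c, Fin (k c)) = Fintype.card α := by
    simp [hk]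
  have htot : Fintype.card (α ≃ (Σ c, Fin (k c))) = Nat.factorial (Fintype.card α) := by
    rw [Fintype.card_equiv (Fintype.equivOfCardEq hcard.symm)]
  have hmain : #t * ∏ c, Nat.factorial (k c) = Nat.multinomial univ k * ∏ c, Nat.factorial (k c) := by
    rw [← Finset.sum_const_nat hfib, ← hsum, htot, mul_comm (Nat.multinomial univ k),
      Nat.multinomial_spec, hk]
  rw [Fintype.card_subtype, ← ht]
  exact Nat.eq_of_mul_eq_mul_right (Finset.prod_pos fun c _ => Nat.factorial_pos _) hmain


lemma card_surj_eq_sum_multinomial (j m : ℕ) :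
    Fintype.card {f : Fin j → Fin m // Function.Surjective f}
      = ∑ l ∈ (piAntidiag (univ : Finset (Fin m)) j).filter (fun l => ∀ i, l i ≠ 0),
          Nat.multinomial univ l := by
  classical
  set T : (Fin j → Fin m) → (Fin m → ℕ) :=
    fun f i => #(univ.filter (fun a => f a = i)) with hT
  have hsum : ∀ f : Fin j → Fin m, ∑ i, T f i = j := by
    intro f
    have := Finset.card_eq_sum_card_fiberwise
      (f := f) (s := univ) (t := univ) (fun a _ => mem_univ (f a))
    simpa using this.symm
  set K := (piAntidiag (univ : Finset (Fin m)) j).filter (fun l => ∀ i, l i ≠ 0) with hK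
  set S : Finset (Fin j → Fin m) := univ.filter (fun f => Function.Surjective f) with hS
  have hmem : ∀ f ∈ S, T f ∈ K := by
    intro f hf
    simp only [hS, mem_filter, mem_univ, true_and] at hf
    simp only [hK, mem_filter, mem_piAntidiag]
    refine ⟨⟨hsum f, fun i _ => mem_univ i⟩, fun i => ?_⟩
    obtain ⟨a, ha⟩ := hf i
    have hmem2 : a ∈ univ.filter (fun a => f a = i) := by simp [ha]
    have hpos : 0 < #(univ.filter (fun a => f a = i)) := Finset.card_pos.mpr ⟨a, hmem2⟩
    exact Nat.pos_iff_ne_zero.mp hpos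
  rw [Fintype.card_subtype, Finset.card_eq_sum_card_fiberwise hmem]
  refine Finset.sum_congr rfl (fun l hl => ?_)
  simp only [hK, mem_filter, mem_piAntidiag] at hl
  obtain ⟨⟨hlsum, -⟩, hlpos⟩ := hl
  have hfilter : S.filter (fun f => T f = l) = univ.filter (fun f => T f = l) := by
    ext f
    simp only [hS, mem_filter, mem_univ, true_and, and_iff_right_iff_imp]
    intro hTf i
    have hpos : 0 < #(univ.filter (fun a => f a = i)) := by
      have h2 : T f i = l i := congrFun hTf i
      simp only [hT] at h2
      rw [h2]
      exact Nat.pos_of_ne_zero (hlpos i)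
    obtain ⟨a, ha⟩ := Finset.card_pos.mp hpos
    simp only [mem_filter] at ha
    exact ⟨a, ha.2⟩
  rw [hfilter]
  have := card_fiber_eq_multinomial (α := Fin j) (γ := Fin m) l (by simpa using hlsum)
  rw [Fintype.card_subtype] at this
  rw [← this]
  congr 1
  ext f
  simp only [mem_filter, mem_univ, true_and, hT, funext_iff]

lemma parts_eq_image_part {α : Type*} [Fintype α] [DecidableEq α]
    (P : Finpartition (univ : Finset α)) : P.parts = univ.image P.part := by
  ext p
  simp only [mem_image]
  constructor
  · intro hp
    obtain ⟨a, _, hap⟩ := P.part_surjOn (Finset.mem_coe.mpr hp)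
    exact ⟨a, mem_univ a, hap⟩
  · rintro ⟨a, -, rfl⟩
    exact P.part_mem.2 (mem_univ a)

lemma card_surj_eq_factorial_mul_card_partitions (j m : ℕ) :
    Fintype.card {f : Fin j → Fin m // Function.Surjective f}
      = Nat.factorial m *
        Fintype.card {P : Finpartition (Finset.univ : Finset (Fin j)) // P.parts.card = m} := by
  classical
  set Pt : (Fin j → Fin m) → Finpartition (univ : Finset (Fin j)) :=
    fun f => Finpartition.ofSetoid (Setoid.ker f) with hPt
  have hpart_eq : ∀ (f : Fin j → Fin m) a, (Pt f).part a = univ.filter (fun b => f b = f a) := by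
    intro f a
    ext b
    simp only [mem_filter, mem_univ, true_and, hPt]
    rw [Finpartition.mem_part_ofSetoid_iff_rel]
    exact eq_comm
  have hparts : ∀ f : Fin j → Fin m, Function.Surjective f →
      (Pt f).parts = univ.image (fun i => univ.filter (fun b => f b = i)) := by
    intro f hf
    rw [parts_eq_image_part]
    ext p
    simp only [mem_image, mem_univ, true_and]
    constructor
    · rintro ⟨a, rfl⟩
      exact ⟨f a, (hpart_eq f a).symm⟩
    · rintro ⟨i, rfl⟩
      obtain ⟨a, rfl⟩ := hf i
      exact ⟨a, hpart_eq f a⟩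
  set S : Finset (Fin j → Fin m) := univ.filter (fun f => Function.Surjective f) with hS
  set Q : Finset (Finpartition (univ : Finset (Fin j))) :=
    univ.filter (fun P => #P.parts = m) with hQ
  have hmem : ∀ f ∈ S, Pt f ∈ Q := by
    intro f hf
    simp only [hS, mem_filter, mem_univ, true_and] at hf
    simp only [hQ, mem_filter, mem_univ, true_and]
    rw [hparts f hf]
    rw [Finset.card_image_of_injective _ ?inj, card_univ, Fintype.card_fin]
    case inj =>
      intro i i' h
      obtain ⟨a, rfl⟩ := hf i
      have ha : a ∈ univ.filter (fun b => f b = f a) := by simp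
      have h2 : univ.filter (fun b => f b = f a) = univ.filter (fun b => f b = i') := h
      rw [h2] at ha
      exact (mem_filter.mp ha).2
  have key : ∀ P ∈ Q, #(S.filter (fun f => Pt f = P)) = Nat.factorial m := by
    intro P hP
    simp only [hQ, mem_filter, mem_univ, true_and] at hP
    -- the labeling map
    have hψmem : ∀ (f : Fin j → Fin m), Function.Surjective f → Pt f = P →
        ∀ i, univ.filter (fun b => f b = i) ∈ P.parts := by
      intro f hf hfP i
      rw [← hfP, hparts f hf]
      exact mem_image_of_mem _ (mem_univ i)
    set ψ : ∀ (f : Fin j → Fin m), Function.Surjective f → Pt f = P → Fin m → ↥P.parts :=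
      fun f hf hfP i => ⟨univ.filter (fun b => f b = i), hψmem f hf hfP i⟩ with hψ
    have hψbij : ∀ f hf hfP, Function.Bijective (ψ f hf hfP) := by
      intro f hf hfP
      constructor
      · intro i i' h
        obtain ⟨a, rfl⟩ := hf i
        have ha : a ∈ univ.filter (fun b => f b = f a) := by simp
        have h' : univ.filter (fun b => f b = f a) = univ.filter (fun b => f b = i') :=
          congrArg Subtype.val h
        rw [h'] at ha
        exact (mem_filter.mp ha).2
      · rintro ⟨p, hp⟩
        rw [← hfP, hparts f hf] at hp
        obtain ⟨i, -, hi⟩ := mem_image.mp hp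
        exact ⟨i, Subtype.ext hi⟩
    set g : (↥P.parts ≃ Fin m) → (Fin j → Fin m) :=
      fun e a => e ⟨P.part a, P.part_mem.2 (mem_univ a)⟩ with hg
    have hg_surj : ∀ e, Function.Surjective (g e) := by
      intro e i
      obtain ⟨a, ha⟩ := P.nonempty_of_mem_parts (e.symm i).2
      refine ⟨a, ?_⟩
      have h1 : P.part a = (e.symm i).val := P.part_eq_of_mem (e.symm i).2 ha
      show e ⟨P.part a, _⟩ = i
      rw [show (⟨P.part a, P.part_mem.2 (mem_univ a)⟩ : ↥P.parts) = e.symm i from Subtype.ext h1]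
      exact e.apply_symm_apply i
    have hg_fiber : ∀ e (q : ↥P.parts), univ.filter (fun b => g e b = e q) = q.val := by
      intro e q
      ext b
      simp only [mem_filter, mem_univ, true_and, hg]
      constructor
      · intro h
        have h2 : (⟨P.part b, P.part_mem.2 (mem_univ b)⟩ : ↥P.parts) = q := e.injective h
        have hb : P.part b = q.val := congrArg Subtype.val h2
        rw [← hb]
        exact P.mem_part (mem_univ b)
      · intro hb
        exact congrArg e (Subtype.ext (P.part_eq_of_mem q.2 hb))
    have hg_Pt : ∀ e, Pt (g e) = P := by
      intro e
      apply Finpartition.ext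
      rw [hparts (g e) (hg_surj e), parts_eq_image_part P]
      ext p
      simp only [mem_image, mem_univ, true_and]
      constructor
      · rintro ⟨i, rfl⟩
        obtain ⟨a, ha⟩ := P.nonempty_of_mem_parts (e.symm i).2
        refine ⟨a, ?_⟩
        have h1 : P.part a = (e.symm i).val := P.part_eq_of_mem (e.symm i).2 ha
        have h2 := hg_fiber e (e.symm i)
        rw [e.apply_symm_apply] at h2
        rw [h2, ← h1]
      · rintro ⟨a, rfl⟩
        refine ⟨g e a, ?_⟩
        have h2 := hg_fiber e ⟨P.part a, P.part_mem.2 (mem_univ a)⟩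
        exact h2
    have hcardsub : Fintype.card {f : Fin j → Fin m // Function.Surjective f ∧ Pt f = P}
        = Nat.factorial m := by
      have E : {f : Fin j → Fin m // Function.Surjective f ∧ Pt f = P} ≃ (↥P.parts ≃ Fin m) :=
        { toFun := fun sub => (Equiv.ofBijective _ (hψbij sub.1 sub.2.1 sub.2.2)).symm
          invFun := fun e => ⟨g e, hg_surj e, hg_Pt e⟩
          left_inv := by
            rintro ⟨f, hf, hfP⟩
            apply Subtype.ext
            funext a
            show (Equiv.ofBijective _ (hψbij f hf hfP)).symm ⟨P.part a, _⟩ = f a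
            have h1 : (⟨P.part a, P.part_mem.2 (mem_univ a)⟩ : ↥P.parts) = ψ f hf hfP (f a) := by
              apply Subtype.ext
              show P.part a = univ.filter (fun b => f b = f a)
              rw [← hfP]
              exact hpart_eq f a
            rw [h1]
            exact (Equiv.ofBijective _ (hψbij f hf hfP)).symm_apply_apply (f a)
          right_inv := by
            intro e
            apply Equiv.ext
            intro q
            have hq : ψ (g e) (hg_surj e) (hg_Pt e) (e q) = q := Subtype.ext (hg_fiber e q)
            show (Equiv.ofBijective _ (hψbij (g e) (hg_surj e) (hg_Pt e))).symm q = e q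
            conv_lhs => rw [← hq]
            exact (Equiv.ofBijective _ (hψbij (g e) (hg_surj e) (hg_Pt e))).symm_apply_apply (e q) }
      rw [Fintype.card_congr E]
      have hcards : Fintype.card ↥P.parts = m := by
        rw [Fintype.card_coe]
        exact hP
      rw [Fintype.card_equiv (Fintype.equivFinOfCardEq hcards), hcards]
    rw [show S.filter (fun f => Pt f = P)
        = univ.filter (fun f => Function.Surjective f ∧ Pt f = P) by
      ext f; simp [hS, Finset.filter_filter]]
    rw [← Fintype.card_subtype]
    exact hcardsub
  rw [Fintype.card_subtype, ← hS, Finset.card_eq_sum_card_fiberwise hmem,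
    Finset.sum_congr rfl key, Finset.sum_const, smul_eq_mul, mul_comm]
  congr 1
  rw [Fintype.card_subtype]

variable {Ω : Type*} [MeasurableSpace Ω] {μ : Measure Ω} [IsProbabilityMeasure μ]

lemma moment_integrable (X : Ω → ℝ) (hX : Measurable X)
    (hu : μ.map X = MeasureTheory.volume.restrict (Set.Icc (0 : ℝ) 1)) (k : ℕ) :
    Integrable (fun ω => (X ω) ^ k) μ := by
  have h : Integrable ((fun x : ℝ => x ^ k) ∘ X) μ := by
    rw [← integrable_map_measure (μ := μ) (f := X) (g := fun x : ℝ => x ^ k)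
      (continuous_pow k).aestronglyMeasurable hX.aemeasurable, hu]
    exact (continuous_pow k).integrableOn_Icc
  exact h

lemma moment_eq (X : Ω → ℝ) (hX : Measurable X)
    (hu : μ.map X = MeasureTheory.volume.restrict (Set.Icc (0 : ℝ) 1)) (k : ℕ) :
    ∫ ω, (X ω) ^ k ∂μ = 1 / (k + 1 : ℝ) := by
  have h1 : ∫ ω, (X ω) ^ k ∂μ = ∫ x, x ^ k ∂(μ.map X) :=
    (integral_map hX.aemeasurable (continuous_pow k).aestronglyMeasurable).symm
  rw [h1, hu]
  have h2 : ∫ x in Set.Icc (0:ℝ) 1, x ^ k = ∫ x in (0:ℝ)..1, x ^ k := by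
    rw [MeasureTheory.integral_Icc_eq_integral_Ioc,
      intervalIntegral.integral_of_le zero_le_one]
  rw [h2, integral_pow]
  simp

lemma indep_prod_integral {m : ℕ} (g : Fin m → Ω → ℝ) (hg : ∀ i, Measurable (g i))
    (hgind : iIndepFun g μ) (hgint : ∀ i, Integrable (g i) μ)
    (s : Finset (Fin m)) :
    Integrable (∏ i ∈ s, g i) μ ∧ ∫ ω, (∏ i ∈ s, g i) ω ∂μ = ∏ i ∈ s, ∫ ω, g i ω ∂μ := by
  classical
  induction s using Finset.induction_on with
  | empty =>
    simp only [Finset.prod_empty]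
    constructor
    · exact integrable_const 1
    · simp [Pi.one_apply]
  | insert _ _ hi _ =>
    rename_i i s ih
    have hIF : IndepFun (∏ j ∈ s, g j) (g i) μ :=
      hgind.indepFun_finsetProd_of_notMem hg hi
    have hint : Integrable ((∏ j ∈ s, g j) * g i) μ :=
      hIF.integrable_mul ih.1 (hgint i)
    have hmul : ∏ j ∈ insert i s, g j = (∏ j ∈ s, g j) * g i := by
      rw [Finset.prod_insert hi, mul_comm]
    constructor
    · rw [hmul]; exact hint
    · rw [hmul, hIF.integral_mul_eq_mul_integral ih.1.aestronglyMeasurable (hgint i).aestronglyMeasurable, Finset.prod_insert hi, ih.2,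
        mul_comm]

lemma integral_sum_pow {m : ℕ} (β : Fin m → Ω → ℝ) (hmeas : ∀ i, Measurable (β i))
    (hindep : iIndepFun β μ)
    (hunif : ∀ i, μ.map (β i) = MeasureTheory.volume.restrict (Set.Icc (0 : ℝ) 1)) (n : ℕ) :
    ∫ ω, (∑ i, β i ω) ^ n ∂μ
      = ∑ k ∈ piAntidiag (univ : Finset (Fin m)) n,
          (Nat.multinomial univ k : ℝ) * ∏ i, (1 / ((k i : ℝ) + 1)) := by
  classical
  have hexp : ∀ ω : Ω, (∑ i, β i ω) ^ n
      = ∑ k ∈ piAntidiag (univ : Finset (Fin m)) n,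
          (Nat.multinomial univ k : ℝ) * ∏ i, (β i ω) ^ (k i) := fun ω =>
    Finset.sum_pow_eq_sum_piAntidiag univ (fun i => β i ω) n
  simp_rw [hexp]
  have hc : ∀ k : Fin m → ℕ,
      iIndepFun (fun i ω => (β i ω) ^ (k i)) μ := by
    intro k
    have := hindep.comp (fun i (x : ℝ) => x ^ (k i)) (fun i => measurable_id.pow_const (k i))
    exact this
  have hkey : ∀ k : Fin m → ℕ,
      Integrable (fun ω => ∏ i, (β i ω) ^ (k i)) μ ∧
      ∫ ω, ∏ i, (β i ω) ^ (k i) ∂μ = ∏ i, ∫ ω, (β i ω) ^ (k i) ∂μ := by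
    intro k
    have h := indep_prod_integral (fun i ω => (β i ω) ^ (k i))
      (fun i => (hmeas i).pow_const (k i)) (hc k)
      (fun i => moment_integrable (β i) (hmeas i) (hunif i) (k i)) univ
    have heqf : (∏ i : Fin m, (fun ω => (β i ω) ^ (k i))) = fun ω => ∏ i, (β i ω) ^ (k i) := by
      funext ω
      simp [Finset.prod_apply]
    rw [heqf] at h
    exact h
  rw [integral_finset_sum _ (fun k _ => ((hkey k).1.const_mul _))]
  refine Finset.sum_congr rfl (fun k _ => ?_)
  rw [integral_const_mul, (hkey k).2]
  congr 1
  exact Finset.prod_congr rfl fun i _ => moment_eq (β i) (hmeas i) (hunif i) (k i)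

lemma nat_identity {m j n : ℕ} (hmn : m + n = j) (k : Fin m → ℕ) (hk : ∑ i, k i = n) :
    j.choose m * Nat.multinomial Finset.univ k * Nat.factorial m
      = Nat.multinomial Finset.univ (fun i => k i + 1) * ∏ i, (k i + 1) := by
  have h1 : (∏ i, Nat.factorial (k i)) * Nat.multinomial univ k = Nat.factorial n := by
    rw [Nat.multinomial_spec, hk]
  have h2 : (∏ i, Nat.factorial (k i + 1)) * Nat.multinomial univ (fun i => k i + 1)
      = Nat.factorial j := by
    rw [Nat.multinomial_spec]
    congr 1
    rw [Finset.sum_add_distrib, hk, Finset.sum_const, card_univ, Fintype.card_fin, smul_eq_mul,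
      mul_one]
    omega
  have h3 : j.choose m * Nat.factorial m * Nat.factorial n = Nat.factorial j := by
    have hle : m ≤ j := by omega
    have h := Nat.choose_mul_factorial_mul_factorial hle
    rw [show j - m = n from by omega] at h
    exact h
  have h4 : ∏ i, Nat.factorial (k i + 1) = (∏ i, (k i + 1)) * ∏ i, Nat.factorial (k i) := by
    rw [← Finset.prod_mul_distrib]
    exact Finset.prod_congr rfl fun i _ => Nat.factorial_succ (k i)
  apply Nat.eq_of_mul_eq_mul_right (show 0 < ∏ i, Nat.factorial (k i) from
    Finset.prod_pos fun i _ => Nat.factorial_pos _)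
  calc j.choose m * Nat.multinomial univ k * Nat.factorial m * ∏ i, Nat.factorial (k i)
      = j.choose m * Nat.factorial m * ((∏ i, Nat.factorial (k i)) * Nat.multinomial univ k) := by
        ring
    _ = Nat.factorial j := by rw [h1, h3]
    _ = (∏ i, Nat.factorial (k i + 1)) * Nat.multinomial univ (fun i => k i + 1) := h2.symm
    _ = Nat.multinomial univ (fun i => k i + 1) * (∏ i, (k i + 1)) * ∏ i, Nat.factorial (k i) := by
        rw [h4]; ring

lemma sum_reindex {m j n : ℕ} (hmn : m + n = j) :
    ∑ k ∈ piAntidiag (univ : Finset (Fin m)) n,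
        (j.choose m : ℝ) * ((Nat.multinomial univ k : ℝ) * ∏ i, (1 / ((k i : ℝ) + 1)))
      = ∑ l ∈ (piAntidiag (univ : Finset (Fin m)) j).filter (fun l => ∀ i, l i ≠ 0),
          (Nat.multinomial univ l : ℝ) / (Nat.factorial m : ℝ) := by
  refine Finset.sum_nbij' (fun k => fun i => k i + 1) (fun l => fun i => l i - 1)
    ?_ ?_ ?_ ?_ ?_
  · intro k hk
    rw [mem_piAntidiag] at hk
    simp only [mem_filter, mem_piAntidiag]
    refine ⟨⟨?_, fun i _ => mem_univ i⟩, fun i => by omega⟩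
    rw [Finset.sum_add_distrib, hk.1, Finset.sum_const, card_univ, Fintype.card_fin, smul_eq_mul,
      mul_one]
    omega
  · intro l hl
    simp only [mem_filter, mem_piAntidiag] at hl
    obtain ⟨⟨hsum, -⟩, hpos⟩ := hl
    rw [mem_piAntidiag]
    refine ⟨?_, fun i _ => mem_univ i⟩
    have h5 : ∑ i, l i = (∑ i, (l i - 1)) + m := by
      calc ∑ i, l i = ∑ i, ((l i - 1) + 1) :=
            Finset.sum_congr rfl fun i _ => by have := hpos i; omega
        _ = (∑ i, (l i - 1)) + m := by
            rw [Finset.sum_add_distrib, Finset.sum_const, card_univ, Fintype.card_fin,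
              smul_eq_mul, mul_one]
    have hsum' : ∑ i, l i = j := hsum
    set A := ∑ i, (l i - 1) with hA
    omega
  · intro k _; funext i; show k i + 1 - 1 = k i; omega
  · intro l hl
    simp only [mem_filter, mem_piAntidiag] at hl
    funext i
    show l i - 1 + 1 = l i
    have := hl.2 i; omega
  · intro k hk
    rw [mem_piAntidiag] at hk
    have hksum : ∑ i, k i = n := hk.1
    have hid := nat_identity hmn k hksum
    have hprod : ∏ i, (1 / ((k i : ℝ) + 1)) = 1 / ∏ i, ((k i : ℝ) + 1) := by
      rw [Finset.prod_div_distrib, Finset.prod_const_one]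
    have hprod_ne : (∏ i, ((k i : ℝ) + 1)) ≠ 0 :=
      ne_of_gt (Finset.prod_pos fun i _ => by positivity)
    have hm_ne : (Nat.factorial m : ℝ) ≠ 0 := Nat.cast_ne_zero.mpr (Nat.factorial_ne_zero m)
    rw [hprod, show (j.choose m : ℝ) * ((Nat.multinomial univ k : ℝ) * (1 / ∏ i, ((k i : ℝ) + 1)))
        = ((j.choose m : ℝ) * (Nat.multinomial univ k : ℝ)) / ∏ i, ((k i : ℝ) + 1) from by ring,
      div_eq_div_iff hprod_ne hm_ne]
    exact_mod_cast hid

end aux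

open Finset in
/-- Sun's probabilistic representation: for `m ≤ j`,
`S(j,m) = C(j,m) · E[(β₁ + ⋯ + β_m)^{j-m}]`, where `β₁,…,β_m` are i.i.d. uniform
random variables on `[0,1]`. -/
theorem stmt_19 {Ω : Type*} [MeasurableSpace Ω] (μ : Measure Ω) [IsProbabilityMeasure μ]
    (j m : ℕ) (hmj : m ≤ j)
    (β : Fin m → Ω → ℝ) (hmeas : ∀ i, Measurable (β i))
    (hindep : iIndepFun β μ)
    (hunif : ∀ i, μ.map (β i) = MeasureTheory.volume.restrict (Set.Icc (0 : ℝ) 1)) :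
    (stirling j m : ℝ)
      = (j.choose m : ℝ) * ∫ ω, (∑ i, β i ω) ^ (j - m) ∂μ := by
  classical
  have hmn : m + (j - m) = j := by omega
  have hm_ne : (Nat.factorial m : ℝ) ≠ 0 := Nat.cast_ne_zero.mpr (Nat.factorial_ne_zero m)
  rw [integral_sum_pow β hmeas hindep hunif (j - m), Finset.mul_sum, sum_reindex hmn,
    ← Finset.sum_div, ← Nat.cast_sum]
  have hcomb : Nat.factorial m * stirling j m
      = ∑ l ∈ (piAntidiag (univ : Finset (Fin m)) j).filter (fun l => ∀ i, l i ≠ 0),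
          Nat.multinomial univ l := by
    rw [← card_surj_eq_sum_multinomial j m, card_surj_eq_factorial_mul_card_partitions j m]
    rfl
  rw [← hcomb, Nat.cast_mul, mul_comm, mul_div_assoc, div_self hm_ne, mul_one]
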